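/- Consider the homogeneous Kuramoto model (ωᵢ = 0 for all i) on a μ-dense network with μ > (3 − √2)/2 ≈ 0.7929 and coupling K > 0. Then every stable equilibrium is phase synchronized: if θ ∈ ℝⁿ satisfies Σⱼ a_ij sin(θᵢ − θⱼ) = 0 for all i and J(θ) is positive semidefinite, then θᵢ ≡ θⱼ (mod 2π) for all i, j. -/

import Mathlib

open Real Finset Matrix

noncomputable section

/-- The matrix `J(θ)` associated with adjacency matrix `A` and phases `θ`. -/
def kuraJ {n : ℕ} (A : Matrix (Fin n) (Fin n) ℝ) (θ : Fin n → ℝ) :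
    Matrix (Fin n) (Fin n) ℝ :=
  Matrix.of fun i j =>
    if i = j then ∑ k, A i k * Real.cos (θ i - θ k)
    else -(A i j * Real.cos (θ i - θ j))

lemma sym_quad {n : ℕ} (f : Fin n → Fin n → ℝ) (hf : ∀ i j, f i j = f j i) (x : Fin n → ℝ) :
    ∑ i, ∑ j, f i j * (x i * (x i - x j)) = (1/2) * ∑ i, ∑ j, f i j * (x i - x j)^2 := by
  have key : ∑ i, ∑ j, f i j * (x i * (x i - x j)) = ∑ i, ∑ j, f i j * (x j * (x j - x i)) := by
    rw [Finset.sum_comm]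
    exact Finset.sum_congr rfl fun i _ => Finset.sum_congr rfl fun j _ => by rw [hf]
  have h2 : ∑ i, ∑ j, (f i j * (x i * (x i - x j)) + f i j * (x j * (x j - x i)))
      = ∑ i, ∑ j, f i j * (x i - x j)^2 :=
    Finset.sum_congr rfl fun i _ => Finset.sum_congr rfl fun j _ => by ring
  have h3 : ∑ i, ∑ j, (f i j * (x i * (x i - x j)) + f i j * (x j * (x j - x i)))
      = (∑ i, ∑ j, f i j * (x i * (x i - x j))) + ∑ i, ∑ j, f i j * (x j * (x j - x i)) := by
    simp [Finset.sum_add_distrib]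
  linarith [key, h2, h3]

lemma kuraJ_quad {n : ℕ} (A : Matrix (Fin n) (Fin n) ℝ) (θ x : Fin n → ℝ)
    (hd : ∀ i, A i i = 0) (hs : ∀ i j, A j i = A i j) :
    x ⬝ᵥ (kuraJ A θ).mulVec x
      = (1/2) * ∑ i, ∑ j, A i j * Real.cos (θ i - θ j) * (x i - x j)^2 := by
  have hrow : ∀ i, (kuraJ A θ).mulVec x i
      = (∑ j, A i j * Real.cos (θ i - θ j)) * x i - ∑ j, A i j * Real.cos (θ i - θ j) * x j := by
    intro i
    simp only [Matrix.mulVec, dotProduct, kuraJ, Matrix.of_apply]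
    have : ∀ j : Fin n, (if i = j then ∑ k, A i k * Real.cos (θ i - θ k)
          else -(A i j * Real.cos (θ i - θ j))) * x j
        = (if i = j then (∑ k, A i k * Real.cos (θ i - θ k)) * x i + A i j * Real.cos (θ i - θ j) * x j
            else 0) - A i j * Real.cos (θ i - θ j) * x j := by
      intro j
      by_cases h : i = j
      · subst h; simp [hd i]
      · simp [h]
    rw [Finset.sum_congr rfl fun j _ => this j, Finset.sum_sub_distrib, Finset.sum_ite_eq Finset.univ i]
    simp [hd i]
  have hmain : x ⬝ᵥ (kuraJ A θ).mulVec x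
      = ∑ i, ∑ j, (A i j * Real.cos (θ i - θ j)) * (x i * (x i - x j)) := by
    simp only [dotProduct]
    rw [Finset.sum_congr rfl fun i _ => by rw [hrow i]]
    refine Finset.sum_congr rfl fun i _ => ?_
    rw [mul_sub, Finset.mul_sum, Finset.sum_mul, Finset.mul_sum, ← Finset.sum_sub_distrib]
    exact Finset.sum_congr rfl fun j _ => by ring
  rw [hmain, sym_quad]
  intro i j
  rw [hs i j, Real.cos_sub, Real.cos_sub]
  ring


lemma cos_sum_sq {n : ℕ} (ψ : Fin n → ℝ) :
    ∑ i, ∑ j, Real.cos (ψ i - ψ j)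
      = (∑ i, Real.cos (ψ i))^2 + (∑ i, Real.sin (ψ i))^2 := by
  have h1 : ∑ i, ∑ j, Real.cos (ψ i - ψ j)
      = ∑ i, ∑ j, (Real.cos (ψ i) * Real.cos (ψ j) + Real.sin (ψ i) * Real.sin (ψ j)) :=
    Finset.sum_congr rfl fun i _ => Finset.sum_congr rfl fun j _ => Real.cos_sub _ _
  rw [h1]
  have h2 : ∑ i, ∑ j, (Real.cos (ψ i) * Real.cos (ψ j) + Real.sin (ψ i) * Real.sin (ψ j))
      = (∑ i, ∑ j, Real.cos (ψ i) * Real.cos (ψ j))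
        + ∑ i, ∑ j, Real.sin (ψ i) * Real.sin (ψ j) := by
    simp [Finset.sum_add_distrib]
  rw [h2, ← Finset.sum_mul_sum, ← Finset.sum_mul_sum]
  ring

lemma sin_sub_int_two_pi (y : ℝ) (a : ℤ) : Real.sin (y - a * (2*π)) = Real.sin y := by
  rw [Real.sin_sub, Real.cos_int_mul_two_pi,
    show ((a:ℝ) * (2*π)) = ((2*a : ℤ) : ℝ) * π by push_cast; ring, Real.sin_int_mul_pi]
  ring

lemma cos_sub_int_two_pi (y : ℝ) (a : ℤ) : Real.cos (y - a * (2*π)) = Real.cos y := by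
  rw [Real.cos_sub, Real.cos_int_mul_two_pi,
    show ((a:ℝ) * (2*π)) = ((2*a : ℤ) : ℝ) * π by push_cast; ring, Real.sin_int_mul_pi]
  ring

set_option maxHeartbeats 2000000 in
/-- Homogeneous Kuramoto model on a μ-dense network with `μ > (3 − √2)/2`: every stable
equilibrium is phase synchronized, i.e. `θ_i ≡ θ_j (mod 2π)` for all `i, j`. -/
theorem homogeneous_stable_implies_phase_sync
    (n : ℕ) (hn : 2 ≤ n) (A : Matrix (Fin n) (Fin n) ℝ)
    (hA01 : ∀ i j, A i j = 0 ∨ A i j = 1) (hAsym : A.IsSymm) (hAdiag : ∀ i, A i i = 0)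
    (μ : ℝ) (hμ : (3 - Real.sqrt 2) / 2 < μ) (hμ1 : μ ≤ 1)
    (hdense : ∀ i, μ * ((n : ℝ) - 1) ≤ ∑ j, A i j)
    (K : ℝ) (hK : 0 < K)
    (θ : Fin n → ℝ)
    (heq : ∀ i, ∑ j, A i j * Real.sin (θ i - θ j) = 0)
    (hpsd : (kuraJ A θ).PosSemidef) :
    ∀ i j, ∃ k : ℤ, θ i - θ j = 2 * π * k := by
  classical
  -- basic facts
  have hA0 : ∀ i j, 0 ≤ A i j := fun i j => by rcases hA01 i j with h | h <;> rw [h] <;> norm_num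
  have hA1le : ∀ i j, A i j ≤ 1 := fun i j => by rcases hA01 i j with h | h <;> rw [h] <;> norm_num
  have hsym : ∀ i j, A j i = A i j := fun i j => hAsym.apply i j
  set N : ℝ := (n : ℝ) with hNdef
  have hN2 : (2:ℝ) ≤ N := by rw [hNdef]; exact_mod_cast hn
  have hite : ∀ (i : Fin n) (h : Fin n → ℝ), ∑ j, (if i = j then (1:ℝ) else 0) * h j = h i := by
    intro i h
    have hpt : ∀ j, (if i = j then (1:ℝ) else 0) * h j = if i = j then h j else 0 := fun j => by
      split <;> simp
    rw [Finset.sum_congr rfl fun j _ => hpt j, Finset.sum_ite_eq]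
    simp
  set M : ℝ := N - 1 with hMdef
  have hM1 : (1:ℝ) ≤ M := by simp [hMdef]; linarith
  set δ : ℝ := (1 - μ) * M with hδdef
  have hδ0 : 0 ≤ δ := by
    apply mul_nonneg <;> linarith
  have hs2 : Real.sqrt 2 ^ 2 = 2 := Real.sq_sqrt (by norm_num)
  have hs2pos : (1:ℝ) < Real.sqrt 2 := by nlinarith [Real.sqrt_nonneg 2]
  have hs2lt : Real.sqrt 2 < 3/2 := by nlinarith [Real.sqrt_nonneg 2]
  have hμ34 : (3:ℝ)/4 < μ := by linarith
  have hkeyμ : 2*(1-μ)^2 < 2*μ - 3/2 := by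
    nlinarith [mul_pos (show (0:ℝ) < 2*μ-(3-Real.sqrt 2) by linarith)
      (show (0:ℝ) < 3+Real.sqrt 2-2*μ by linarith)]
  -- the quadratic form is nonnegative
  have hquad : ∀ x : Fin n → ℝ, 0 ≤ ∑ i, ∑ j, A i j * Real.cos (θ i - θ j) * (x i - x j)^2 := by
    intro x
    have h := hpsd.dotProduct_mulVec_nonneg x
    simp only [RCLike.re_to_real, star_trivial] at h
    rw [kuraJ_quad A θ x hAdiag hsym] at h
    linarith
  -- slack matrix B
  set B : Fin n → Fin n → ℝ := fun i j => if i = j then 0 else 1 - A i j with hBdef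
  have hB0 : ∀ i j, 0 ≤ B i j := by
    intro i j; simp only [hBdef]
    by_cases h : i = j <;> simp [h] <;> linarith [hA1le i j]
  have hdecompA : ∀ i j, A i j = 1 - (if i = j then (1:ℝ) else 0) - B i j := by
    intro i j; simp only [hBdef]
    by_cases h : i = j <;> simp [h]
    · rw [← h]; simp [hAdiag i]
  have hBrow : ∀ i, ∑ j, B i j ≤ δ := by
    intro i
    have hBeq : ∑ j, B i j = N - 1 - ∑ j, A i j := by
      have hpt : ∀ j, B i j = 1 - (if i = j then (1:ℝ) else 0) * 1 - A i j := by
        intro j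
        rw [hdecompA i j]
        ring
      rw [Finset.sum_congr rfl fun j _ => hpt j]
      rw [Finset.sum_sub_distrib, Finset.sum_sub_distrib, hite i (fun _ => 1)]
      simp [hNdef]
    rw [hBeq]
    have hd := hdense i
    simp only [hδdef]
    linarith [hMdef]
  have hBtot : ∑ i, ∑ j, B i j ≤ N * δ := by
    calc ∑ i, ∑ j, B i j ≤ ∑ _i : Fin n, δ := Finset.sum_le_sum fun i _ => hBrow i
      _ = N * δ := by
          rw [Finset.sum_const, Finset.card_univ, Fintype.card_fin, nsmul_eq_mul, hNdef]
  -- decomposition of A-weighted sums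
  have hAsum : ∀ g : Fin n → Fin n → ℝ,
      ∑ i, ∑ j, A i j * g i j
        = (∑ i, ∑ j, g i j) - (∑ i, g i i) - ∑ i, ∑ j, B i j * g i j := by
    intro g
    have : ∀ i, ∑ j, A i j * g i j
        = (∑ j, g i j) - g i i - ∑ j, B i j * g i j := by
      intro i
      have h1 : ∀ j, A i j * g i j
          = g i j - (if i = j then (1:ℝ) else 0) * g i j - B i j * g i j := by
        intro j; rw [hdecompA i j]; ring
      rw [Finset.sum_congr rfl fun j _ => h1 j, Finset.sum_sub_distrib, Finset.sum_sub_distrib]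
      rw [hite i (fun j => g i j)]
    rw [Finset.sum_congr rfl fun i _ => this i, Finset.sum_sub_distrib, Finset.sum_sub_distrib]
  have hBbound : ∀ g : Fin n → Fin n → ℝ, (∀ i j, |g i j| ≤ 1) →
      |∑ i, ∑ j, B i j * g i j| ≤ N * δ := by
    intro g hg
    calc |∑ i, ∑ j, B i j * g i j| ≤ ∑ i, |∑ j, B i j * g i j| :=
          Finset.abs_sum_le_sum_abs _ _
      _ ≤ ∑ i, ∑ j, |B i j * g i j| :=
          Finset.sum_le_sum fun i _ => Finset.abs_sum_le_sum_abs _ _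
      _ ≤ ∑ i, ∑ j, B i j := by
          refine Finset.sum_le_sum fun i _ => Finset.sum_le_sum fun j _ => ?_
          rw [abs_mul, abs_of_nonneg (hB0 i j)]
          calc B i j * |g i j| ≤ B i j * 1 := by
                exact mul_le_mul_of_nonneg_left (hg i j) (hB0 i j)
            _ = B i j := mul_one _
      _ ≤ N * δ := hBtot
  -- order parameter
  set C : ℝ := ∑ i, Real.cos (θ i) with hCdef
  set S : ℝ := ∑ i, Real.sin (θ i) with hSdef
  clear_value N M δ C S
  -- first stability consequence : sum of A cos^2 ≤ sum of A cos
  have hstab : ∑ i, ∑ j, A i j * Real.cos (θ i - θ j) ^ 2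
      ≤ ∑ i, ∑ j, A i j * Real.cos (θ i - θ j) := by
    have h1 := hquad (fun i => Real.sin (θ i))
    have h2 := hquad (fun i => Real.cos (θ i))
    have h3 : ∑ i, ∑ j, (A i j * Real.cos (θ i - θ j) * (Real.sin (θ i) - Real.sin (θ j))^2
        + A i j * Real.cos (θ i - θ j) * (Real.cos (θ i) - Real.cos (θ j))^2)
        = ∑ i, ∑ j, (2 * (A i j * Real.cos (θ i - θ j))
            - 2 * (A i j * Real.cos (θ i - θ j)^2)) := by
      refine Finset.sum_congr rfl fun i _ => Finset.sum_congr rfl fun j _ => ?_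
      have hc : Real.cos (θ i - θ j)
          = Real.cos (θ i) * Real.cos (θ j) + Real.sin (θ i) * Real.sin (θ j) :=
        Real.cos_sub _ _
      rw [hc]
      linear_combination (A i j * (Real.cos (θ i) * Real.cos (θ j)
          + Real.sin (θ i) * Real.sin (θ j))) * Real.sin_sq_add_cos_sq (θ i)
        + (A i j * (Real.cos (θ i) * Real.cos (θ j)
          + Real.sin (θ i) * Real.sin (θ j))) * Real.sin_sq_add_cos_sq (θ j)
    have h4 : ∑ i, ∑ j, (A i j * Real.cos (θ i - θ j) * (Real.sin (θ i) - Real.sin (θ j))^2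
        + A i j * Real.cos (θ i - θ j) * (Real.cos (θ i) - Real.cos (θ j))^2)
        = (∑ i, ∑ j, A i j * Real.cos (θ i - θ j) * (Real.sin (θ i) - Real.sin (θ j))^2)
          + ∑ i, ∑ j, A i j * Real.cos (θ i - θ j) * (Real.cos (θ i) - Real.cos (θ j))^2 := by
      simp [Finset.sum_add_distrib]
    have h5 : ∑ i, ∑ j, (2 * (A i j * Real.cos (θ i - θ j))
            - 2 * (A i j * Real.cos (θ i - θ j)^2))
        = 2 * (∑ i, ∑ j, A i j * Real.cos (θ i - θ j))
          - 2 * ∑ i, ∑ j, A i j * Real.cos (θ i - θ j)^2 := by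
      simp [Finset.sum_sub_distrib, Finset.mul_sum]
    linarith
  -- rewrite the main sums
  have hT1 : ∑ i, ∑ j, A i j * Real.cos (θ i - θ j)
      = (C^2 + S^2) - N - ∑ i, ∑ j, B i j * Real.cos (θ i - θ j) := by
    rw [hAsum (fun i j => Real.cos (θ i - θ j)), cos_sum_sq θ]
    simp [hNdef, hCdef, hSdef]
  have hE1 : |∑ i, ∑ j, B i j * Real.cos (θ i - θ j)| ≤ N * δ :=
    hBbound _ fun i j => Real.abs_cos_le_one _
  have hT2' : ∑ i, ∑ j, A i j * Real.cos (2*θ i - 2*θ j)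
      = ((∑ i, Real.cos (2*θ i))^2 + (∑ i, Real.sin (2*θ i))^2) - N
        - ∑ i, ∑ j, B i j * Real.cos (2*θ i - 2*θ j) := by
    rw [hAsum (fun i j => Real.cos (2*θ i - 2*θ j)), cos_sum_sq (fun i => 2*θ i)]
    simp [hNdef]
  have hE2 : |∑ i, ∑ j, B i j * Real.cos (2*θ i - 2*θ j)| ≤ N * δ :=
    hBbound _ fun i j => Real.abs_cos_le_one _
  have hT2sq : ∑ i, ∑ j, A i j * Real.cos (θ i - θ j)^2
      = (∑ i, ∑ j, A i j) / 2 + (∑ i, ∑ j, A i j * Real.cos (2*θ i - 2*θ j)) / 2 := by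
    have hpt : ∀ i j : Fin n, A i j * Real.cos (θ i - θ j)^2
        = A i j / 2 + (A i j * Real.cos (2*θ i - 2*θ j)) / 2 := by
      intro i j
      have : Real.cos (θ i - θ j)^2 = 1/2 + Real.cos (2*(θ i - θ j))/2 := by
        rw [Real.cos_sq]
      rw [this, show 2*(θ i - θ j) = 2*θ i - 2*θ j by ring]
      ring
    rw [Finset.sum_congr rfl fun i _ => Finset.sum_congr rfl fun j _ => hpt i j]
    simp [Finset.sum_add_distrib, Finset.sum_div]
  have hedges : μ * N * M ≤ ∑ i, ∑ j, A i j := by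
    calc μ * N * M = ∑ _i : Fin n, μ * M := by
          rw [Finset.sum_const, Finset.card_univ, Fintype.card_fin, nsmul_eq_mul, hNdef]; ring
      _ ≤ ∑ i, ∑ j, A i j := Finset.sum_le_sum fun i _ => hdense i
  -- the key lower bound on C^2 + S^2
  have hQ1 : μ * N * M / 2 + N / 2 - 3/2 * (N * δ) ≤ C^2 + S^2 := by
    have e1 := abs_le.mp hE1
    have e2 := abs_le.mp hE2
    linarith [hstab, hT1, hT2sq, hT2', hedges, e1.1, e1.2, e2.1, e2.2,
      sq_nonneg (∑ i, Real.cos (2*θ i)), sq_nonneg (∑ i, Real.sin (2*θ i))]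
  have h2μ : 0 < 2*μ - 3/2 := by linarith
  have hMpos : (0:ℝ) < M := by linarith
  have hNM : N = M + 1 := by rw [hMdef]; ring
  have hQ1big : 2*δ^2 < C^2 + S^2 := by
    calc 2*δ^2 = 2*((1-μ)*M)^2 := by rw [hδdef]
      _ < M^2*(2*μ - 3/2) := by nlinarith [mul_lt_mul_of_pos_left hkeyμ (mul_pos hMpos hMpos)]
      _ ≤ M*N*(2*μ - 3/2) := by nlinarith [h2μ, hMpos, hNM]
      _ ≤ C^2 + S^2 := by
          have hδ' : N * δ = N * ((1-μ)*M) := by rw [hδdef]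
          nlinarith [hQ1, hNM, hN2]
  have hQ1pos : 0 < C^2 + S^2 := by nlinarith [hQ1big, sq_nonneg δ]
  -- the rotation angle ψ
  obtain ⟨r, hrpos, hr2⟩ : ∃ r : ℝ, 0 < r ∧ r^2 = C^2 + S^2 :=
    ⟨Real.sqrt (C^2 + S^2), Real.sqrt_pos.mpr hQ1pos, Real.sq_sqrt hQ1pos.le⟩
  set z : ℂ := (C : ℂ) + (S : ℂ) * Complex.I with hzdef
  have hzre : z.re = C := by simp [hzdef]
  have hzim : z.im = S := by simp [hzdef]
  have habs : ‖z‖ = r := by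
    rw [Complex.norm_def, Complex.normSq_apply, hzre, hzim,
      show C * C + S * S = r^2 by rw [hr2]; ring]
    exact Real.sqrt_sq hrpos.le
  have hz : z ≠ 0 := by
    intro h
    rw [h] at habs
    simp at habs
    linarith
  set ψ : ℝ := Complex.arg z with hψdef
  have hcosψ : Real.cos ψ = C / r := by rw [hψdef, Complex.cos_arg hz, habs, hzre]
  have hsinψ : Real.sin ψ = S / r := by rw [hψdef, Complex.sin_arg, habs, hzim]
  set φ : Fin n → ℝ := fun i => θ i - ψ with hφdef
  have hφsub : ∀ i j, φ i - φ j = θ i - θ j := by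
    intro i j; simp only [hφdef]; ring
  have hCφ : ∑ i, Real.cos (φ i) = r := by
    simp only [hφdef, Real.cos_sub]
    rw [Finset.sum_add_distrib, ← Finset.sum_mul, ← Finset.sum_mul, ← hCdef, ← hSdef,
      hcosψ, hsinψ]
    field_simp
    linarith [hr2]
  have hSφ : ∑ i, Real.sin (φ i) = 0 := by
    simp only [hφdef, Real.sin_sub]
    rw [Finset.sum_sub_distrib, ← Finset.sum_mul, ← Finset.sum_mul, ← hCdef, ← hSdef,
      hcosψ, hsinψ]
    field_simp
    ring
  -- equilibrium forces every phase close to ψ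
  have hEi : ∀ i, |r * Real.sin (φ i)| ≤ δ := by
    intro i
    have h1 : ∑ j, Real.sin (θ j - θ i) = -(r * Real.sin (φ i)) := by
      have hpt : ∀ j, Real.sin (θ j - θ i)
          = Real.sin (φ j) * Real.cos (φ i) - Real.cos (φ j) * Real.sin (φ i) := by
        intro j
        rw [← Real.sin_sub, show φ j - φ i = θ j - θ i from hφsub j i]
      rw [Finset.sum_congr rfl fun j _ => hpt j, Finset.sum_sub_distrib,
        ← Finset.sum_mul, ← Finset.sum_mul, hSφ, hCφ]
      ring
    have hA' : ∑ j, A i j * Real.sin (θ j - θ i) = 0 := by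
      have hpt : ∀ j, A i j * Real.sin (θ j - θ i) = -(A i j * Real.sin (θ i - θ j)) := by
        intro j
        rw [show θ j - θ i = -(θ i - θ j) by ring, Real.sin_neg]
        ring
      rw [Finset.sum_congr rfl fun j _ => hpt j, Finset.sum_neg_distrib, heq i, neg_zero]
    have h2 : ∑ j, Real.sin (θ j - θ i) = ∑ j, B i j * Real.sin (θ j - θ i) := by
      have hpt : ∀ j, Real.sin (θ j - θ i)
          = A i j * Real.sin (θ j - θ i) + (if i = j then (1:ℝ) else 0) * Real.sin (θ j - θ i)
            + B i j * Real.sin (θ j - θ i) := by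
        intro j
        rw [hdecompA i j]
        ring
      rw [Finset.sum_congr rfl fun j _ => hpt j, Finset.sum_add_distrib,
        Finset.sum_add_distrib, hA', hite i (fun j => Real.sin (θ j - θ i))]
      simp
    have h3 : |∑ j, B i j * Real.sin (θ j - θ i)| ≤ δ := by
      calc |∑ j, B i j * Real.sin (θ j - θ i)| ≤ ∑ j, |B i j * Real.sin (θ j - θ i)| :=
            Finset.abs_sum_le_sum_abs _ _
        _ ≤ ∑ j, B i j := by
            refine Finset.sum_le_sum fun j _ => ?_
            rw [abs_mul, abs_of_nonneg (hB0 i j)]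
            calc B i j * |Real.sin (θ j - θ i)| ≤ B i j * 1 :=
                  mul_le_mul_of_nonneg_left (Real.abs_sin_le_one _) (hB0 i j)
              _ = B i j := mul_one _
        _ ≤ δ := hBrow i
    rw [← abs_neg, ← h1, h2]
    exact h3
  have hsin2 : ∀ i, Real.sin (φ i)^2 < 1/2 := by
    intro i
    have h := abs_le.mp (hEi i)
    have hsq : (r * Real.sin (φ i))^2 ≤ δ^2 := by nlinarith only [h.1, h.2, hδ0]
    nlinarith only [hsq, hQ1big, hr2, mul_pos hrpos hrpos, sq_nonneg (Real.sin (φ i))]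
  have hcos2 : ∀ i, 1/2 < Real.cos (φ i)^2 := by
    intro i
    nlinarith only [Real.sin_sq_add_cos_sq (φ i), hsin2 i]
  have hcosne : ∀ i, Real.cos (φ i) ≠ 0 := by
    intro i h
    have := hcos2 i
    rw [h] at this
    norm_num at this
  -- cross pairs have negative cosine
  have hcross : ∀ p q, Real.cos (φ p) < 0 → 0 < Real.cos (φ q) →
      Real.cos (θ p - θ q) < 0 := by
    intro p q hp hq
    have hrw : Real.cos (θ p - θ q)
        = Real.cos (φ p) * Real.cos (φ q) + Real.sin (φ p) * Real.sin (φ q) := by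
      rw [← hφsub p q, Real.cos_sub]
    rw [hrw]
    have hucq : 1/2 < (-Real.cos (φ p)) * Real.cos (φ q) := by
      nlinarith only [mul_pos (neg_pos.mpr hp) hq, hcos2 p, hcos2 q]
    have hss : Real.sin (φ p) * Real.sin (φ q) < 1/2 := by
      nlinarith only [hsin2 p, hsin2 q, sq_nonneg (Real.sin (φ p) - Real.sin (φ q))]
    nlinarith only [hucq, hss]
  -- the cut argument : no edges between the two clusters
  have hcut : ∀ i j, Real.cos (φ i) < 0 → 0 < Real.cos (φ j) → A i j = 0 := by
    intro i j hi hj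
    set x : Fin n → ℝ := fun k => if Real.cos (φ k) < 0 then 1 else 0 with hxdef
    have hterm : ∀ p q : Fin n, A p q * Real.cos (θ p - θ q) * (x p - x q)^2 ≤ 0 := by
      intro p q
      by_cases hp : Real.cos (φ p) < 0 <;> by_cases hq : Real.cos (φ q) < 0
      · simp [hxdef, hp, hq]
      · have hqpos : 0 < Real.cos (φ q) := lt_of_le_of_ne (not_lt.mp hq) (Ne.symm (hcosne q))
        have hneg := hcross p q hp hqpos
        have hx : (x p - x q)^2 = 1 := by simp [hxdef, hp, hq]
        rw [hx, mul_one]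
        exact mul_nonpos_of_nonneg_of_nonpos (hA0 p q) hneg.le
      · have hppos : 0 < Real.cos (φ p) := lt_of_le_of_ne (not_lt.mp hp) (Ne.symm (hcosne p))
        have hneg := hcross q p hq hppos
        have hneg' : Real.cos (θ p - θ q) < 0 := by
          rw [show θ p - θ q = -(θ q - θ p) by ring, Real.cos_neg]
          exact hneg
        have hx : (x p - x q)^2 = 1 := by simp [hxdef, hp, hq]
        rw [hx, mul_one]
        exact mul_nonpos_of_nonneg_of_nonpos (hA0 p q) hneg'.le
      · simp [hxdef, hp, hq]
    have hnonpos : ∀ p ∈ Finset.univ (α := Fin n),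
        ∑ q, A p q * Real.cos (θ p - θ q) * (x p - x q)^2 ≤ 0 :=
      fun p _ => Finset.sum_nonpos fun q _ => hterm p q
    have hsum0 : ∑ p, ∑ q, A p q * Real.cos (θ p - θ q) * (x p - x q)^2 = 0 :=
      le_antisymm (Finset.sum_nonpos hnonpos) (hquad x)
    have houter := (Finset.sum_eq_zero_iff_of_nonpos hnonpos).mp hsum0 i (Finset.mem_univ i)
    have hij := (Finset.sum_eq_zero_iff_of_nonpos fun q _ => hterm i q).mp houter j
      (Finset.mem_univ j)
    have hx : (x i - x j)^2 = 1 := by simp [hxdef, hi, not_lt.mpr hj.le]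
    rw [hx, mul_one] at hij
    rcases mul_eq_zero.mp hij with h | h
    · exact h
    · exact absurd h (hcross i j hi hj).ne
  -- all phases lie strictly in the half circle around ψ
  have hposall : ∀ i, 0 < Real.cos (φ i) := by
    by_contra hcon
    push_neg at hcon
    obtain ⟨i0, hi0le⟩ := hcon
    have hi0 : Real.cos (φ i0) < 0 := lt_of_le_of_ne hi0le (hcosne i0)
    have hPex : ∃ j0, 0 < Real.cos (φ j0) := by
      by_contra hP
      push_neg at hP
      have hle : ∑ i, Real.cos (φ i) ≤ 0 := Finset.sum_nonpos fun k _ => hP k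
      rw [hCφ] at hle
      linarith only [hle, hrpos]
    obtain ⟨j0, hj0⟩ := hPex
    set Nf := Finset.univ.filter (fun k => Real.cos (φ k) < 0) with hNf
    set Pf := Finset.univ.filter (fun k => 0 < Real.cos (φ k)) with hPf
    have hi0N : i0 ∈ Nf := by simp [hNf, hi0]
    have hj0P : j0 ∈ Pf := by simp [hPf, hj0]
    have hPNc : Pf = Nfᶜ := by
      ext k
      simp only [hNf, hPf, Finset.mem_compl, Finset.mem_filter, Finset.mem_univ, true_and]
      constructor
      · intro h; exact not_lt.mpr h.le
      · intro h; exact lt_of_le_of_ne (not_lt.mp h) (Ne.symm (hcosne k))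
    have hcard : (Nf.card : ℝ) + (Pf.card : ℝ) = N := by
      rw [hPNc, hNdef]
      have := Finset.card_add_card_compl Nf
      rw [Fintype.card_fin] at this
      exact_mod_cast this
    have hdegbound : ∀ (v : Fin n) (T : Finset (Fin n)), v ∈ T →
        (∀ q, q ≠ v → q ∉ T → A v q = 0) → ∑ j, A v j ≤ (T.card : ℝ) - 1 := by
      intro v T hvT hzero
      have hstep : ∑ j, A v j ≤ ∑ j, (if j ∈ T.erase v then (1:ℝ) else 0) := by
        refine Finset.sum_le_sum fun q _ => ?_
        by_cases hqv : q = v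
        · subst hqv
          simp [hAdiag q, Finset.mem_erase]
        · by_cases hqT : q ∈ T
          · have : q ∈ T.erase v := Finset.mem_erase.mpr ⟨hqv, hqT⟩
            simp [this]
            exact hA1le v q
          · rw [hzero q hqv hqT]
            split <;> norm_num
      have hcount : ∑ j, (if j ∈ T.erase v then (1:ℝ) else 0) = ((T.erase v).card : ℝ) := by
        rw [Finset.sum_boole]
        congr 1
        rw [Finset.filter_univ_mem]
      rw [hcount, Finset.card_erase_of_mem hvT] at hstep
      have h1T : 1 ≤ T.card := Finset.card_pos.mpr ⟨v, hvT⟩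
      calc ∑ j, A v j ≤ ((T.card - 1 : ℕ) : ℝ) := hstep
        _ = (T.card : ℝ) - 1 := by
            rw [Nat.cast_sub h1T]; norm_num
    have hdN : ∑ j, A i0 j ≤ (Nf.card : ℝ) - 1 := by
      refine hdegbound i0 Nf hi0N fun q hqv hqN => ?_
      have hqpos : 0 < Real.cos (φ q) := by
        rcases (hcosne q).lt_or_gt with h | h
        · exact absurd (by simp [hNf, h] : q ∈ Nf) hqN
        · exact h
      exact hcut i0 q hi0 hqpos
    have hdP : ∑ j, A j0 j ≤ (Pf.card : ℝ) - 1 := by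
      refine hdegbound j0 Pf hj0P fun q hqv hqP => ?_
      have hqneg : Real.cos (φ q) < 0 := by
        rcases (hcosne q).lt_or_gt with h | h
        · exact h
        · exact absurd (by simp [hPf, h] : q ∈ Pf) hqP
      rw [← hsym j0 q]
      exact hcut q j0 hqneg hj0
    have d1 := hdense i0
    have d2 := hdense j0
    linarith only [d1, d2, hdN, hdP, hcard, hNM, hM1,
      mul_lt_mul_of_pos_right hμ34 hMpos]
  -- representatives in (-π, π]
  have hpi := Real.pi_pos
  set k : Fin n → ℤ := fun i => toIocDiv Real.two_pi_pos (-π) (φ i) with hkdef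
  set ξ : Fin n → ℝ := fun i => toIocMod Real.two_pi_pos (-π) (φ i) with hξdef
  have hφξ : ∀ i, φ i - ξ i = (k i : ℝ) * (2*π) := by
    intro i
    simp only [hξdef, hkdef]
    rw [← zsmul_eq_mul]
    exact self_sub_toIocMod Real.two_pi_pos (-π) (φ i)
  have hξmem : ∀ i, -π < ξ i ∧ ξ i ≤ π := by
    intro i
    have h := toIocMod_mem_Ioc Real.two_pi_pos (-π) (φ i)
    rw [Set.mem_Ioc] at h
    exact ⟨h.1, by linarith [h.2]⟩
  have hcosξ : ∀ i, Real.cos (ξ i) = Real.cos (φ i) := by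
    intro i
    have h : ξ i = φ i - (k i : ℝ)*(2*π) := by linarith [hφξ i]
    rw [h, cos_sub_int_two_pi]
  have hsinξd : ∀ i j, Real.sin (ξ i - ξ j) = Real.sin (θ i - θ j) := by
    intro i j
    have h : ξ i - ξ j = (θ i - θ j) - ((k i - k j : ℤ) : ℝ)*(2*π) := by
      push_cast
      linear_combination hφsub i j - hφξ i + hφξ j
    rw [h, sin_sub_int_two_pi]
  have hcosbig : ∀ i, Real.sqrt 2/2 < Real.cos (ξ i) := by
    intro i
    rw [hcosξ i]
    nlinarith only [hcos2 i, hposall i, hs2, Real.sqrt_nonneg 2]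
  have hξ4 : ∀ i, -(π/4) < ξ i ∧ ξ i < π/4 := by
    intro i
    have hc := hcosbig i
    have hcpi4 : Real.cos (π/4) = Real.sqrt 2 / 2 := Real.cos_pi_div_four
    constructor
    · by_contra hcon
      push_neg at hcon
      have h1 : Real.cos (-ξ i) ≤ Real.cos (π/4) :=
        Real.cos_le_cos_of_nonneg_of_le_pi (by linarith) (by linarith [(hξmem i).1])
          (by linarith)
      rw [Real.cos_neg, hcpi4] at h1
      linarith
    · by_contra hcon
      push_neg at hcon
      have h1 : Real.cos (ξ i) ≤ Real.cos (π/4) :=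
        Real.cos_le_cos_of_nonneg_of_le_pi (by linarith) (hξmem i).2 (by linarith)
      rw [hcpi4] at h1
      linarith
  -- neighbors of a maximal vertex share its phase
  have hmaxnb : ∀ m', (∀ i, ξ i ≤ ξ m') → ∀ j, A m' j ≠ 0 → ξ j = ξ m' := by
    intro m' hmax j hAj
    have h0 : ∑ q, A m' q * Real.sin (ξ m' - ξ q) = 0 := by
      have hpt : ∀ q, A m' q * Real.sin (ξ m' - ξ q) = A m' q * Real.sin (θ m' - θ q) :=
        fun q => by rw [hsinξd]
      rw [Finset.sum_congr rfl fun q _ => hpt q]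
      exact heq m'
    have hnn : ∀ q ∈ Finset.univ (α := Fin n), 0 ≤ A m' q * Real.sin (ξ m' - ξ q) := by
      intro q _
      apply mul_nonneg (hA0 m' q)
      apply Real.sin_nonneg_of_nonneg_of_le_pi
      · linarith [hmax q]
      · linarith [(hξ4 m').2, (hξ4 q).1]
    have hz0 := (Finset.sum_eq_zero_iff_of_nonneg hnn).mp h0 j (Finset.mem_univ j)
    have hsin0 : Real.sin (ξ m' - ξ j) = 0 := by
      rcases mul_eq_zero.mp hz0 with h | h
      · exact absurd h hAj
      · exact h
    have hzz := (Real.sin_eq_zero_iff_of_lt_of_lt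
      (show -π < ξ m' - ξ j by linarith [(hξ4 m').1, (hξ4 j).2])
      (show ξ m' - ξ j < π by linarith [(hξ4 m').2, (hξ4 j).1])).mp hsin0
    linarith
  obtain ⟨m, _, hm⟩ := Finset.exists_max_image (Finset.univ : Finset (Fin n)) ξ
    ⟨⟨0, by omega⟩, Finset.mem_univ _⟩
  have hmax' : ∀ i, ξ i ≤ ξ m := fun i => hm i (Finset.mem_univ i)
  have hallm : ∀ i, ξ i = ξ m := by
    intro i
    by_cases him : i = m
    · rw [him]
    by_cases hAmi : A m i ≠ 0
    · exact hmaxnb m hmax' i hAmi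
    push_neg at hAmi
    have hcn : ∃ c, A m c ≠ 0 ∧ A i c ≠ 0 := by
      by_contra hno
      push_neg at hno
      have hb : ∀ c, A m c + A i c ≤ (if c = m then (0:ℝ) else if c = i then 0 else 1) := by
        intro c
        by_cases hcm : c = m
        · subst hcm
          have him' : A i c = 0 := by rw [hsym c i]; exact hAmi
          simp [hAdiag c, him']
        · by_cases hci : c = i
          · subst hci
            simp [hcm, hAdiag c, hAmi]
          · simp only [hcm, hci, if_false]
            by_cases hAc : A m c = 0
            · rw [hAc]
              linarith [hA1le i c]
            · rw [hno c hAc]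
              linarith [hA1le m c]
      have hsum : (∑ c, A m c) + (∑ c, A i c) ≤ N - 2 := by
        have h1 : ∑ c, (A m c + A i c) ≤ ∑ c, (if c = m then (0:ℝ) else if c = i then 0 else 1) :=
          Finset.sum_le_sum fun c _ => hb c
        have h2 : ∑ c, (if c = m then (0:ℝ) else if c = i then 0 else 1) = N - 2 := by
          have hpt : ∀ c : Fin n, (if c = m then (0:ℝ) else if c = i then 0 else 1)
              = 1 - (if m = c then (1:ℝ) else 0)*1 - (if i = c then (1:ℝ) else 0)*1 := by
            intro c
            by_cases h1' : c = m
            · subst h1'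
              simp [him]
            · by_cases h2' : c = i
              · subst h2'
                have hmc' : ¬ m = c := fun h => h1' h.symm
                simp [h1', hmc']
              · have hmc' : ¬ m = c := fun h => h1' h.symm
                have hic' : ¬ i = c := fun h => h2' h.symm
                simp [h1', h2', hmc', hic']
          rw [Finset.sum_congr rfl fun c _ => hpt c, Finset.sum_sub_distrib,
            Finset.sum_sub_distrib, hite m (fun _ => 1), hite i (fun _ => 1)]
          rw [Finset.sum_const, Finset.card_univ, Fintype.card_fin, nsmul_eq_mul, mul_one, hNdef]
          ring
        rw [Finset.sum_add_distrib] at h1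
        linarith [h1, h2.ge, h2.le]
      linarith only [hsum, hdense m, hdense i, hNM, hM1,
        mul_lt_mul_of_pos_right hμ34 hMpos]
    obtain ⟨c, hmc, hic⟩ := hcn
    have hcm : ξ c = ξ m := hmaxnb m hmax' c hmc
    have hmax'' : ∀ i', ξ i' ≤ ξ c := by
      intro i'
      rw [hcm]
      exact hmax' i'
    have hci : A c i ≠ 0 := by
      rw [← hsym c i]
      exact hic
    have hfin := hmaxnb c hmax'' i hci
    rw [hfin, hcm]
  -- conclusion
  intro i j
  refine ⟨k i - k j, ?_⟩
  have h4 : ξ i = ξ j := by rw [hallm i, hallm j]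
  push_cast
  linear_combination hφξ i - hφξ j - hφsub i j + h4
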